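/- Let S be the zero-union of finite semigroups S₁, …, Sₙ and let NC be the set of indices i with Sᵢ non-commutative. If |NC| ≥ 2, then the commuting graph of S is the graph join of the commuting graphs of the Sᵢ for i ∈ NC. -/

import Mathlib

open SimpleGraph

/-- The center of a magma/semigroup: elements commuting with everything. -/
def sgCenter (S : Type*) [Mul S] : Set S := {x | ∀ y, x * y = y * x}

/-- The commuting graph of a semigroup: vertices are non-central elements,
distinct vertices adjacent iff they commute. -/
def commGraph (S : Type*) [Mul S] : SimpleGraph {x : S // x ∉ sgCenter S} where
  Adj x y := x ≠ y ∧ (x : S) * y = (y : S) * x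
  symm := ⟨fun x y ⟨h, h'⟩ => ⟨h.symm, h'.symm⟩⟩
  loopless := ⟨fun x ⟨h, _⟩ => h rfl⟩

/-- The extended commuting graph of a semigroup: vertices are all elements,
distinct vertices adjacent iff they commute. -/
def extCommGraph (S : Type*) [Mul S] : SimpleGraph S where
  Adj x y := x ≠ y ∧ x * y = y * x
  symm := ⟨fun x y ⟨h, h'⟩ => ⟨h.symm, h'.symm⟩⟩
  loopless := ⟨fun x ⟨h, _⟩ => h rfl⟩

/-- The graph join of two graphs on disjoint vertex sets. -/
def graphJoin {V W : Type*} (G : SimpleGraph V) (H : SimpleGraph W) :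
    SimpleGraph (V ⊕ W) where
  Adj x y := match x, y with
    | .inl a, .inl b => G.Adj a b
    | .inr a, .inr b => H.Adj a b
    | .inl _, .inr _ => True
    | .inr _, .inl _ => True
  symm := ⟨by rintro (a|a) (b|b) h <;> simp_all [SimpleGraph.Adj.symm]⟩
  loopless := ⟨by rintro (a|a) h; exacts [G.loopless.irrefl a h, H.loopless.irrefl a h]⟩

/-- The graph join of a family of graphs on disjoint vertex sets. -/
def graphJoinFam {ι : Type*} {V : ι → Type*} (G : ∀ i, SimpleGraph (V i)) :
    SimpleGraph (Σ i, V i) where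
  Adj x y := x.1 ≠ y.1 ∨ ∃ a b : V x.1, (G x.1).Adj a b ∧ x = ⟨x.1, a⟩ ∧ y = ⟨x.1, b⟩
  symm := ⟨by
    rintro ⟨i, a⟩ ⟨j, b⟩ (h | ⟨a', b', hadj, h1, h2⟩)
    · exact Or.inl h.symm
    · cases h1; cases h2
      exact Or.inr ⟨b', a, hadj.symm, rfl, rfl⟩⟩
  loopless := ⟨by
    rintro ⟨i, a⟩ (h | ⟨a', b', hadj, h1, h2⟩)
    · exact h rfl
    · cases h1
      cases h2
      exact (G i).loopless.irrefl _ hadj⟩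

/-- The strong product of two simple graphs. -/
def strongProd {V W : Type*} (G : SimpleGraph V) (H : SimpleGraph W) :
    SimpleGraph (V × W) where
  Adj x y := x ≠ y ∧ (x.1 = y.1 ∨ G.Adj x.1 y.1) ∧ (x.2 = y.2 ∨ H.Adj x.2 y.2)
  symm := ⟨fun x y ⟨h, h1, h2⟩ =>
    ⟨h.symm, h1.imp Eq.symm (fun h => G.symm.symm _ _ h), h2.imp Eq.symm (fun h => H.symm.symm _ _ h)⟩⟩
  loopless := ⟨fun x ⟨h, _⟩ => h rfl⟩

/-- The strong product of a family of simple graphs. -/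
def strongProdFam {ι : Type*} {V : ι → Type*} (G : ∀ i, SimpleGraph (V i)) :
    SimpleGraph (∀ i, V i) where
  Adj x y := x ≠ y ∧ ∀ i, x i = y i ∨ (G i).Adj (x i) (y i)
  symm := ⟨fun x y ⟨h, h'⟩ => ⟨h.symm, fun i => (h' i).imp Eq.symm (fun h => (G i).symm.symm _ _ h)⟩⟩
  loopless := ⟨fun x ⟨h, _⟩ => h rfl⟩

/-- `p` is a left path in the commuting graph of `S`. -/
def IsLeftPath {S : Type*} [Mul S] {u v : {x : S // x ∉ sgCenter S}}
    (p : (commGraph S).Walk u v) : Prop :=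
  p.IsPath ∧ u ≠ v ∧ ∀ w ∈ p.support, (u : S) * (w : S) = (v : S) * (w : S)

/-- The commuting graph of `S` contains a left path. -/
def HasLeftPath (S : Type*) [Mul S] : Prop :=
  ∃ (u v : {x : S // x ∉ sgCenter S}) (p : (commGraph S).Walk u v), IsLeftPath p

/-- The knit degree of `S`: the length of a shortest left path in its commuting graph. -/
noncomputable def knitDegree (S : Type*) [Mul S] : ℕ :=
  sInf {m | ∃ (u v : {x : S // x ∉ sgCenter S}) (p : (commGraph S).Walk u v),
    IsLeftPath p ∧ p.length = m}

/-- `p` is a *-left path in the extended commuting graph of `S`. -/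
def IsStarLeftPath {S : Type*} [Mul S] {u v : S}
    (p : (extCommGraph S).Walk u v) : Prop :=
  p.IsPath ∧ u ≠ v ∧ ∀ w ∈ p.support, u * w = v * w

/-- The extended commuting graph of `S` contains a *-left path. -/
def HasStarLeftPath (S : Type*) [Mul S] : Prop :=
  ∃ (u v : S) (p : (extCommGraph S).Walk u v), IsStarLeftPath p

/-- The *-knit degree of `S`. -/
noncomputable def starKnitDegree (S : Type*) [Mul S] : ℕ :=
  sInf {m | ∃ (u v : S) (p : (extCommGraph S).Walk u v), IsStarLeftPath p ∧ p.length = m}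

/-- The zero-union of a family of semigroups: their disjoint union plus a new zero. -/
def ZeroUnion {n : ℕ} (S : Fin n → Type*) : Type _ := Option (Σ i, S i)

instance {n : ℕ} (S : Fin n → Type*) [∀ i, Mul (S i)] : Mul (ZeroUnion S) where
  mul x y := match x, y with
    | some ⟨i, a⟩, some ⟨j, b⟩ =>
      if h : j = i then some ⟨i, a * (h ▸ b)⟩ else none
    | _, _ => none

section Aux

variable {n : ℕ} {S : Fin n → Type*} [∀ i, Mul (S i)]

/-- Inclusion of a component into the zero-union. -/
abbrev zuSome (i : Fin n) (a : S i) : ZeroUnion S := some ⟨i, a⟩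

/-- The zero of the zero-union. -/
abbrev zuN : ZeroUnion S := none

lemma zu_mul_same (i : Fin n) (a b : S i) :
    zuSome i a * zuSome i b = zuSome i (a * b) := by
  have h0 : zuSome i a * zuSome i b = if h : i = i then zuSome i (a * (h ▸ b)) else zuN := rfl
  rw [h0, dif_pos rfl]

lemma zu_mul_ne {i j : Fin n} (h : i ≠ j) (a : S i) (b : S j) :
    zuSome i a * zuSome j b = (zuN : ZeroUnion S) := by
  have h0 : zuSome i a * zuSome j b = if h : j = i then zuSome i (a * (h ▸ b)) else zuN := rfl
  rw [h0, dif_neg (Ne.symm h)]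

lemma zu_none_mul (x : ZeroUnion S) : (zuN : ZeroUnion S) * x = zuN := rfl

lemma zu_mul_none (x : ZeroUnion S) : x * (zuN : ZeroUnion S) = zuN := by
  cases x with
  | none => rfl
  | some p => rcases p with ⟨i, a⟩; rfl

lemma zu_none_center : (zuN : ZeroUnion S) ∈ sgCenter (ZeroUnion S) := by
  intro y
  rw [zu_none_mul, zu_mul_none]

lemma zu_some_center (i : Fin n) (a : S i) :
    zuSome i a ∈ sgCenter (ZeroUnion S) ↔ a ∈ sgCenter (S i) := by
  constructor
  · intro h b
    have h0 := h (zuSome i b)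
    rw [zu_mul_same, zu_mul_same] at h0
    have h1 : (⟨i, a * b⟩ : Σ i, S i) = ⟨i, b * a⟩ := Option.some_injective _ h0
    exact eq_of_heq (Sigma.mk.inj_iff.mp h1).2
  · intro h y
    cases y with
    | none =>
      rw [show (none : ZeroUnion S) = zuN from rfl, zu_none_mul, zu_mul_none]
    | some p =>
      rcases p with ⟨j, b⟩
      show zuSome i a * zuSome j b = zuSome j b * zuSome i a
      rcases eq_or_ne i j with rfl | hij
      · rw [zu_mul_same, zu_mul_same, h b]
      · rw [zu_mul_ne hij, zu_mul_ne hij.symm]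

lemma zuSome_inj (i : Fin n) {a b : S i} : zuSome i a = zuSome i b ↔ a = b := by
  constructor
  · intro h
    have h1 : (⟨i, a⟩ : Σ i, S i) = ⟨i, b⟩ := Option.some_injective _ h
    exact eq_of_heq (Sigma.mk.inj_iff.mp h1).2
  · rintro rfl; rfl

lemma zuSome_ne {i j : Fin n} (h : i ≠ j) (a : S i) (b : S j) :
    zuSome i a ≠ zuSome j b := fun he =>
  h (Sigma.mk.inj_iff.mp (Option.some_injective _ he)).1

end Aux

theorem commGraph_zeroUnion_iso_graphJoinFam {n : ℕ} (S : Fin n → Type*)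
    [∀ i, Semigroup (S i)] [∀ i, Fintype (S i)] [∀ i, Nonempty (S i)]
    (h2 : ∃ i j : Fin n, i ≠ j ∧ ¬ (∀ x y : S i, x * y = y * x) ∧
      ¬ (∀ x y : S j, x * y = y * x)) :
    Nonempty (commGraph (ZeroUnion S) ≃g
      graphJoinFam (fun i : {i : Fin n // ¬ ∀ x y : S i, x * y = y * x} =>
        commGraph (S i.1))) := by
  classical
  clear h2
  refine ⟨?_⟩
  let F : {x : ZeroUnion S // x ∉ sgCenter (ZeroUnion S)} →
      Σ i : {i : Fin n // ¬ ∀ x y : S i, x * y = y * x}, {a : S i.1 // a ∉ sgCenter (S i.1)} :=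
    fun x =>
      match x with
      | ⟨none, hx⟩ => absurd zu_none_center hx
      | ⟨some ⟨i, a⟩, hx⟩ =>
        ⟨⟨i, fun hall => hx ((zu_some_center i a).mpr (fun b => hall a b))⟩,
         ⟨a, fun h => hx ((zu_some_center i a).mpr h)⟩⟩
  refine ⟨⟨F, fun p => ⟨some ⟨p.1.1, p.2.1⟩, fun h => p.2.2 ((zu_some_center _ _).mp h)⟩,
    ?_, ?_⟩, ?_⟩
  · rintro ⟨x, hx⟩
    match x, hx with
    | none, hx => exact absurd zu_none_center hx
    | some ⟨i, a⟩, hx => rfl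
  · rintro ⟨⟨i, hi⟩, ⟨a, ha⟩⟩
    rfl
  · rintro ⟨x, hx⟩ ⟨y, hy⟩
    match x, hx, y, hy with
    | none, hx, _, _ => exact absurd zu_none_center hx
    | some _, _, none, hy => exact absurd zu_none_center hy
    | some ⟨i, a⟩, hx, some ⟨j, b⟩, hy =>
      show (graphJoinFam (fun i : {i : Fin n // ¬ ∀ x y : S i, x * y = y * x} =>
          commGraph (S i.1))).Adj
        ⟨⟨i, _⟩, ⟨a, _⟩⟩ ⟨⟨j, _⟩, ⟨b, _⟩⟩ ↔
          (commGraph (ZeroUnion S)).Adj ⟨zuSome i a, hx⟩ ⟨zuSome j b, hy⟩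
      rcases eq_or_ne i j with rfl | hij
      · simp only [graphJoinFam, commGraph, ne_eq, Subtype.mk.injEq, Sigma.mk.inj_iff,
          heq_eq_eq, Option.some.injEq, zu_mul_same]
        constructor
        · rintro (h | ⟨a', b', ⟨hne, hc⟩, h1, h2⟩)
          · exact absurd trivial h
          · obtain ⟨-, rfl⟩ := h1
            obtain ⟨-, rfl⟩ := h2
            exact ⟨fun hab => hne (Subtype.ext ((zuSome_inj i).mp hab)),
              congrArg (zuSome i) hc⟩
        · rintro ⟨hne, hc⟩
          exact Or.inr ⟨⟨a, fun h => hx ((zu_some_center i a).mpr h)⟩,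
            ⟨b, fun h => hy ((zu_some_center i b).mpr h)⟩,
            ⟨fun h => hne (congrArg (zuSome i) (Subtype.ext_iff.mp h)),
              (zuSome_inj i).mp hc⟩, ⟨trivial, rfl⟩, ⟨trivial, rfl⟩⟩
      · simp only [graphJoinFam, commGraph, ne_eq, Subtype.mk.injEq, Sigma.mk.inj_iff,
          Option.some.injEq, zu_mul_ne hij, zu_mul_ne hij.symm]
        constructor
        · intro _
          exact ⟨fun h => zuSome_ne hij a b h, trivial⟩
        · intro _
          exact Or.inl hij
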